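/- Let V be a linear subspace of a Euclidean space E with orthogonal complement V⊥, let X⋆ ⊆ V be nonempty, and suppose for all v ∈ V we have dist(v, X⋆) ≤ γ‖Av − b‖ + γ'·dist(v, F) for a linear map A, vector b, and set F ⊆ V. Then for all x ∈ E, dist(x, X⋆) ≤ (1 + γσ_max(A))‖P_{V⊥}(x)‖ + γ‖Ax − b‖ + γ'·dist(P_V(x), F), where P_V and P_{V⊥} are orthogonal projections onto V and V⊥, and σ_max(A) is the largest singular value of A. -/

import Mathlib

theorem stmt5 {E F : Type*} [NormedAddCommGroup E] [InnerProductSpace ℝ E]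
    [FiniteDimensional ℝ E] [NormedAddCommGroup F] [InnerProductSpace ℝ F]
    [FiniteDimensional ℝ F]
    (V : Submodule ℝ E) (Xs : Set E) (hXsne : Xs.Nonempty)
    (hXsV : Xs ⊆ (V : Set E))
    (A : E →L[ℝ] F) (b : F) (Fset : Set E) (hFV : Fset ⊆ (V : Set E))
    (γ γ' : ℝ) (hγ : 0 ≤ γ) (hγ' : 0 ≤ γ')
    (h : ∀ v ∈ V, Metric.infDist v Xs ≤ γ * ‖A v - b‖ + γ' * Metric.infDist v Fset) :
    ∀ x : E, Metric.infDist x Xs ≤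
      (1 + γ * ‖A‖) * ‖(Submodule.orthogonalProjectionOnto Vᗮ x : E)‖ + γ * ‖A x - b‖
        + γ' * Metric.infDist ((Submodule.orthogonalProjectionOnto V x : E)) Fset := by
  intro x
  set v : E := (Submodule.orthogonalProjectionOnto V x : E) with hv
  set w : E := (Submodule.orthogonalProjectionOnto Vᗮ x : E) with hw
  have hx : x = v + w := (V.starProjection_add_starProjection_orthogonal x).symm
  have hdist : dist x v = ‖w‖ := by
    rw [dist_eq_norm, hx]; simp
  have h1 : Metric.infDist x Xs ≤ Metric.infDist v Xs + ‖w‖ := by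
    simpa [hdist] using Metric.infDist_le_infDist_add_dist (x := x) (y := v) (s := Xs)
  have h2 := h v (Submodule.orthogonalProjectionOnto V x).2
  have h3 : ‖A v - b‖ ≤ ‖A‖ * ‖w‖ + ‖A x - b‖ := by
    calc ‖A v - b‖ ≤ ‖A v - A x‖ + ‖A x - b‖ := by
          simpa using norm_sub_le_norm_sub_add_norm_sub (A v) (A x) b
      _ ≤ ‖A‖ * ‖w‖ + ‖A x - b‖ := by
          gcongr
          have : A v - A x = A (-w) := by rw [hx]; simp
          rw [this]
          simpa using A.le_opNorm (-w)
  nlinarith [Metric.infDist_nonneg (x := v) (s := Fset), norm_nonneg w]
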